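/- Suppose ⟨λ_i : i < θ⟩ is an increasing sequence of cardinals with limit λ, κ₁ ≤ κ₂ ≤ λ₀ are infinite cardinals, and D(λ_i,κ₁,κ₂) ≤ λ for all i < θ. Then D(λ,κ₁,κ₃) = λ for every cardinal κ₃ with κ₂ < κ₃ ≤ λ, and if cf(λ) ≠ cf(κ₂) then also D(λ,κ₁,κ₂) = λ. -/

import Mathlib

open Cardinal

/-- A family `D` of subsets of `α` is dense in `[α]^{κ₂}`. -/
def IsDenseIn {α : Type u} (D : Set (Set α)) (κ₂ : Cardinal.{u}) : Prop :=
  ∀ Y : Set α, #Y = κ₂ → ∃ Z ∈ D, Z ⊆ Y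

/-- The density `D(λ,κ₁,κ₂)`. -/
noncomputable def Density (l κ₁ κ₂ : Cardinal.{u}) : Cardinal.{u} :=
  sInf { c : Cardinal.{u} | ∃ D : Set (Set l.out),
    (∀ X ∈ D, #X = κ₁) ∧ IsDenseIn D κ₂ ∧ c = #D }

lemma density_set_nonempty (l κ₁ κ₂ : Cardinal.{u}) (h12 : κ₁ ≤ κ₂) :
    { c : Cardinal.{u} | ∃ D : Set (Set l.out),
      (∀ X ∈ D, #X = κ₁) ∧ IsDenseIn D κ₂ ∧ c = #D }.Nonempty := by
  refine ⟨_, {X : Set l.out | #X = κ₁}, fun X hX => hX, ?_, rfl⟩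
  intro Y hY
  obtain ⟨Z, hZY, hZ⟩ := Cardinal.le_mk_iff_exists_subset.1 (show κ₁ ≤ #Y by rw [hY]; exact h12)
  exact ⟨Z, hZ, hZY⟩

lemma density_lower {lam κ₁ κ : Cardinal.{u}} (h1 : ℵ₀ ≤ κ₁) (h1l : κ₁ < lam)
    (hkl : κ ≤ lam) (D : Set (Set lam.out)) (hm : ∀ X ∈ D, #X = κ₁)
    (hd : IsDenseIn D κ) : lam ≤ #D := by
  by_contra hlt
  push_neg at hlt
  have hlaminf : ℵ₀ ≤ lam := h1.trans h1l.le
  haveI : Infinite lam.out := by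
    rw [Cardinal.infinite_iff, Cardinal.mk_out]; exact hlaminf
  have hU : #(⋃₀ D) < lam := by
    have h1' := Cardinal.mk_sUnion_le D
    have h2' : (⨆ s : D, #(s : Set lam.out)) ≤ κ₁ := ciSup_le' fun s => (hm s.1 s.2).le
    have h3' : #(⋃₀ D) ≤ #D * κ₁ := h1'.trans (mul_le_mul_right h2' _)
    exact h3'.trans_lt (Cardinal.mul_lt_of_lt hlaminf hlt h1l)
  have hcompl : #(↥(⋃₀ D)ᶜ) = lam := by
    have := Cardinal.mk_compl_of_infinite (⋃₀ D) (by rw [Cardinal.mk_out]; exact hU)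
    rwa [Cardinal.mk_out] at this
  obtain ⟨Y, hYs, hYc⟩ := Cardinal.le_mk_iff_exists_subset.1 (hcompl ▸ hkl)
  obtain ⟨Z, hZD, hZY⟩ := hd Y hYc
  have hZne : Z.Nonempty := by
    rw [← Set.nonempty_coe_sort, ← Cardinal.mk_ne_zero_iff, hm Z hZD]
    exact (aleph0_pos.trans_le h1).ne'
  obtain ⟨x, hx⟩ := hZne
  exact (hYs (hZY hx)) (Set.mem_sUnion.2 ⟨Z, hZD, hx⟩)

/-- transports a dense family from a set of size `l i` to cover subsets of `S`. -/
lemma good_transport {lam κ₁ κ₂ : Cardinal.{u}} {θ : Ordinal.{u}} {l : Ordinal.{u} → Cardinal.{u}}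
    (hD : ∀ i < θ, Density (l i) κ₁ κ₂ ≤ lam) (h12 : κ₁ ≤ κ₂)
    (S : Set lam.out) (i : Ordinal.{u}) (hi : i < θ) (hS : #S ≤ l i) :
    ∃ E : Set (Set lam.out), (∀ X ∈ E, #X = κ₁) ∧ #E ≤ lam ∧
      ∀ Y ⊆ S, #Y = κ₂ → ∃ Z ∈ E, Z ⊆ Y := by
  obtain ⟨D₀, hm₀, hd₀, hc₀⟩ := csInf_mem (density_set_nonempty (l i) κ₁ κ₂ h12)
  have hD₀le : #D₀ ≤ lam := hc₀ ▸ hD i hi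
  obtain ⟨j⟩ : Nonempty (↥S ↪ (l i).out) := by
    rw [← Cardinal.le_def, Cardinal.mk_out]; exact hS
  classical
  refine ⟨(fun Z => Subtype.val '' ((j : ↥S → (l i).out) ⁻¹' Z)) ''
      {Z | Z ∈ D₀ ∧ Z ⊆ Set.range j}, ?_, ?_, ?_⟩
  · rintro X ⟨Z, ⟨hZD, hZr⟩, rfl⟩
    rw [Cardinal.mk_image_eq Subtype.val_injective,
      Cardinal.mk_preimage_of_injective_of_subset_range _ Z j.injective hZr]
    exact hm₀ Z hZD
  · refine (Cardinal.mk_image_le).trans (le_trans ?_ hD₀le)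
    exact Cardinal.mk_le_mk_of_subset fun Z hZ => hZ.1
  · intro Y hYS hYc
    have hpre : #((Subtype.val : ↥S → lam.out) ⁻¹' Y) = κ₂ := by
      rw [Cardinal.mk_preimage_of_injective_of_subset_range _ Y Subtype.val_injective
        (by rw [Subtype.range_coe]; exact hYS)]
      exact hYc
    have hY' : #((j : ↥S → (l i).out) '' (Subtype.val ⁻¹' Y)) = κ₂ := by
      rw [Cardinal.mk_image_eq j.injective]; exact hpre
    obtain ⟨Z, hZD, hZY'⟩ := hd₀ _ hY'
    refine ⟨Subtype.val '' ((j : ↥S → (l i).out) ⁻¹' Z),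
      ⟨Z, ⟨hZD, hZY'.trans (Set.image_subset_range _ _)⟩, rfl⟩, ?_⟩
    have h1 : (j : ↥S → (l i).out) ⁻¹' Z ⊆ Subtype.val ⁻¹' Y := by
      refine (Set.preimage_mono hZY').trans ?_
      rw [Set.preimage_image_eq _ j.injective]
    exact (Set.image_mono h1).trans (Set.image_preimage_subset _ _)

instance subrelSetIsWellOrder {α : Type u} (r : α → α → Prop) [IsWellOrder α r] (Y : Set α) :
    IsWellOrder (Subtype Y) (Subrel r Y) :=
  show IsWellOrder (Subtype fun x => x ∈ Y) (Subrel r fun x => x ∈ Y) from inferInstance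

lemma cof_type_le_r {α : Type u} {r : α → α → Prop} [H : IsWellOrder α r] {S : Set α}
    (h : Set.Unbounded r S) : (Ordinal.type r).cof ≤ #S := by
  classical
  let := linearOrderOfSTO r
  have : WellFoundedLT α := H.toIsWellFounded
  have e : Ordinal.type r = Ordinal.type (α := α) (· < ·) := rfl
  rw [e, Ordinal.cof_type]
  apply Order.cof_le
  intro a
  obtain ⟨b, hb, hn⟩ := h a
  exact ⟨b, hb, not_lt.1 hn⟩

lemma cof_eq_r {α : Type u} (r : α → α → Prop) [H : IsWellOrder α r] :
    ∃ S : Set α, Set.Unbounded r S ∧ #S = (Ordinal.type r).cof := by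
  classical
  let := linearOrderOfSTO r
  have : WellFoundedLT α := H.toIsWellFounded
  have e : Ordinal.type r = Ordinal.type (α := α) (· < ·) := rfl
  rw [e, Ordinal.cof_type]
  obtain ⟨S, hS, hS'⟩ := Order.exists_cof_eq α
  refine ⟨S, fun a => ?_, hS'⟩
  obtain ⟨b, hb, hab⟩ := hS a
  exact ⟨b, hb, not_lt.2 hab⟩

lemma exists_segment {α : Type u} (r : α → α → Prop) [IsWellOrder α r] (Y : Set α)
    {κ : Cardinal.{u}} (h : κ.ord < Ordinal.type (Subrel r Y)) :
    ∃ y ∈ Y, #{x | x ∈ Y ∧ r x y} = κ := by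
  obtain ⟨v, hv⟩ := Ordinal.typein_surj (Subrel r Y) h
  refine ⟨v.val, v.2, ?_⟩
  have h1 : #{w : ↥Y | Subrel r Y w v} = κ := by
    have := Ordinal.card_typein (r := Subrel r Y) v
    rw [hv, Cardinal.card_ord] at this
    exact this.symm
  have h2 : {x | x ∈ Y ∧ r x v.val} = Subtype.val '' {w : ↥Y | Subrel r Y w v} := by
    ext x
    constructor
    · rintro ⟨hxY, hxr⟩; exact ⟨⟨x, hxY⟩, hxr, rfl⟩
    · rintro ⟨w, hw, rfl⟩; exact ⟨w.2, hw⟩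
  rw [h2, Cardinal.mk_image_eq Subtype.val_injective, h1]

lemma cof_subrel {α : Type u} (r : α → α → Prop) [IsWellOrder α r] (S : Set α)
    (hU : Set.Unbounded r S) :
    (Ordinal.type (Subrel r S)).cof = (Ordinal.type r).cof := by
  have tn : ∀ {a b c : α}, ¬ r b a → ¬ r c b → ¬ r c a := by
    intro a b c h1 h2 h3
    rcases trichotomous_of r c b with h | h | h
    · exact h2 h
    · exact h1 (h ▸ h3)
    · exact h1 (trans_of r h h3)
  apply le_antisymm
  · obtain ⟨T, hTU, hTc⟩ := cof_eq_r r
    choose g hg1 hg2 using hU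
    have hU' : Set.Unbounded (Subrel r S) (Set.range (fun t : ↥T => (⟨g t.val, hg1 _⟩ : ↥S))) := by
      intro y
      obtain ⟨t, htT, htn⟩ := hTU y.val
      exact ⟨⟨g t, hg1 t⟩, ⟨⟨t, htT⟩, rfl⟩, tn htn (hg2 t)⟩
    refine (cof_type_le_r hU').trans ?_
    exact (Cardinal.mk_range_le).trans_eq hTc
  · obtain ⟨S', hS'U, hS'c⟩ := cof_eq_r (Subrel r S)
    have hU' : Set.Unbounded r (Subtype.val '' S') := by
      intro a
      obtain ⟨b, hbS, hbn⟩ := hU a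
      obtain ⟨y, hyS', hyn⟩ := hS'U ⟨b, hbS⟩
      exact ⟨y.val, ⟨y, hyS', rfl⟩, tn hbn hyn⟩
    refine (cof_type_le_r hU').trans ?_
    exact (Cardinal.mk_image_le).trans hS'c.le

theorem density_continuity_at_limits (θ : Ordinal.{0}) (lam : Cardinal.{0})
    (l : Ordinal.{0} → Cardinal.{0})
    (hincr : ∀ i j : Ordinal, i < j → j < θ → l i < l j)
    (hlt : ∀ i < θ, l i < lam)
    (hlim : ∀ c : Cardinal.{0}, c < lam → ∃ i < θ, c ≤ l i)
    (κ₁ κ₂ : Cardinal.{0}) (hκ₁ : ℵ₀ ≤ κ₁) (hκ₁₂ : κ₁ ≤ κ₂) (hκ₂ : κ₂ ≤ l 0)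
    (hD : ∀ i < θ, Density (l i) κ₁ κ₂ ≤ lam) :
    (∀ κ₃ : Cardinal.{0}, κ₂ < κ₃ → κ₃ ≤ lam → Density lam κ₁ κ₃ = lam) ∧
    (lam.ord.cof ≠ κ₂.ord.cof → Density lam κ₁ κ₂ = lam) := by
  classical
  by_cases hlam0 : lam = 0
  · subst hlam0
    constructor
    · intro κ₃ h23 h3l
      exact absurd ((aleph0_pos.trans_le (hκ₁.trans hκ₁₂)).trans h23) (not_lt.2 h3l)
    · intro _
      have hmem : (0 : Cardinal) ∈ { c : Cardinal | ∃ D : Set (Set (0 : Cardinal.{0}).out),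
          (∀ X ∈ D, #X = κ₁) ∧ IsDenseIn D κ₂ ∧ c = #D } := by
        refine ⟨∅, fun X hX => absurd hX (Set.notMem_empty X), ?_, (Cardinal.mk_emptyCollection _).symm⟩
        intro Y hY
        exfalso
        have h1 : #Y ≤ #((0 : Cardinal.{0}).out) := Cardinal.mk_le_mk_of_subset (Set.subset_univ Y) |>.trans
          (by rw [Cardinal.mk_univ])
        rw [Cardinal.mk_out, hY] at h1
        exact absurd (h1.trans_lt aleph0_pos) (not_lt.2 (hκ₁.trans hκ₁₂))
      exact le_antisymm (csInf_le' hmem) (Cardinal.zero_le _)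
  · have hlampos : (0 : Cardinal) < lam := pos_iff_ne_zero.2 hlam0
    obtain ⟨i₀, hi₀θ, -⟩ := hlim 0 hlampos
    have h0θ : (0 : Ordinal) < θ := lt_of_le_of_lt (zero_le : (0 : Ordinal) ≤ i₀) hi₀θ
    have hl0lam : l 0 < lam := hlt 0 h0θ
    have hk2lam : κ₂ < lam := lt_of_le_of_lt hκ₂ hl0lam
    have hk1lam : κ₁ < lam := lt_of_le_of_lt hκ₁₂ hk2lam
    have hlaminf : ℵ₀ ≤ lam := hκ₁.trans hk1lam.le
    -- helper: density equals lam
    have density_eq : ∀ κ : Cardinal.{0}, κ ≤ lam → ∀ D : Set (Set lam.out),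
        (∀ X ∈ D, #X = κ₁) → IsDenseIn D κ → #D ≤ lam → Density lam κ₁ κ = lam := by
      intro κ hκl D hm hd hsz
      have hmem : lam ∈ { c : Cardinal | ∃ D : Set (Set lam.out),
          (∀ X ∈ D, #X = κ₁) ∧ IsDenseIn D κ ∧ c = #D } :=
        ⟨D, hm, hd, (le_antisymm hsz (density_lower hκ₁ hk1lam hκl D hm hd)).symm⟩
      refine le_antisymm (csInf_le' hmem) (le_csInf ⟨_, hmem⟩ ?_)
      rintro c ⟨D', h1, h2, rfl⟩
      exact density_lower hκ₁ hk1lam hκl D' h1 h2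
    -- set up the well-order
    obtain ⟨e⟩ : Nonempty (lam.out ≃ lam.ord.ToType) :=
      Cardinal.eq.1 (by rw [Cardinal.mk_out, Cardinal.mk_toType, Cardinal.card_ord])
    set r : lam.out → lam.out → Prop := fun a b => e a < e b with hr
    have iso : r ≃r ((· < ·) : lam.ord.ToType → lam.ord.ToType → Prop) := ⟨e, Iff.rfl⟩
    haveI : IsWellOrder lam.out r := @RelEmbedding.isWellOrder _ _ r _ iso.toRelEmbedding isWellOrder_lt
    have typer : Ordinal.type r = lam.ord :=
      ((@Ordinal.type_eq _ _ r _ _ isWellOrder_lt).2 ⟨iso⟩).trans (Ordinal.type_toType _)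
    have hI : ∀ y : lam.out, #{x | r x y} < lam := by
      intro y
      have h1 : #{x | r x y} = (Ordinal.typein r y).card := Ordinal.card_typein (r := r) y
      have h2 : Ordinal.typein r y < lam.ord := typer ▸ Ordinal.typein_lt_type r y
      rw [h1]
      exact Cardinal.lt_ord.1 h2
    have hEy : ∀ y : lam.out, ∃ E : Set (Set lam.out), (∀ X ∈ E, #X = κ₁) ∧ #E ≤ lam ∧
        ∀ Y ⊆ {x | r x y}, #Y = κ₂ → ∃ Z ∈ E, Z ⊆ Y := by
      intro y
      obtain ⟨i, hiθ, hile⟩ := hlim _ (hI y)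
      exact good_transport hD hκ₁₂ {x | r x y} i hiθ hile
    choose E hE1 hE2 hE3 using hEy
    have hDm : ∀ X ∈ ⋃ y, E y, #X = κ₁ := by
      intro X hX
      obtain ⟨y, hy⟩ := Set.mem_iUnion.1 hX
      exact hE1 y X hy
    have hDsz : #(⋃ y, E y) ≤ lam := by
      refine (Cardinal.mk_iUnion_le E).trans ?_
      have h1 : (⨆ y, #(E y)) ≤ lam := ciSup_le' hE2
      calc #lam.out * ⨆ y, #(E y) ≤ lam * lam := by
            rw [Cardinal.mk_out]; exact mul_le_mul_right h1 _
        _ = lam := Cardinal.mul_eq_self hlaminf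
    have hDgood : ∀ (Y : Set lam.out) (y : lam.out), (∀ x ∈ Y, r x y) → #Y = κ₂ →
        ∃ Z ∈ ⋃ y, E y, Z ⊆ Y := by
      intro Y y hb hc
      obtain ⟨Z, hZ, hZY⟩ := hE3 y Y (fun x hx => hb x hx) hc
      exact ⟨Z, Set.mem_iUnion.2 ⟨y, hZ⟩, hZY⟩
    have hseg_case : ∀ (Y : Set lam.out), κ₂.ord < Ordinal.type (Subrel r Y) →
        ∃ Z ∈ ⋃ y, E y, Z ⊆ Y := by
      intro Y hτ
      obtain ⟨y, hyY, hsegc⟩ := exists_segment r Y hτ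
      obtain ⟨Z, hZD, hZs⟩ := hDgood {x | x ∈ Y ∧ r x y} y (fun x hx => hx.2) hsegc
      exact ⟨Z, hZD, hZs.trans (fun x hx => hx.1)⟩
    constructor
    · intro κ₃ h23 h3l
      refine density_eq κ₃ h3l _ hDm ?_ hDsz
      intro Y hY
      refine hseg_case Y ?_
      by_contra hle
      push_neg at hle
      have h1 := Ordinal.card_le_card hle
      rw [Ordinal.card_type, Cardinal.card_ord] at h1
      replace h1 : κ₃ ≤ κ₂ := by rw [← hY]; exact h1
      exact absurd h1 (not_le.2 h23)
    · intro hcof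
      refine density_eq κ₂ hk2lam.le _ hDm ?_ hDsz
      intro Y hY
      by_cases hτ : κ₂.ord < Ordinal.type (Subrel r Y)
      · exact hseg_case Y hτ
      · have hcard : (Ordinal.type (Subrel r Y)).card = κ₂ := by
          rw [Ordinal.card_type]; exact hY
        have hle2 : κ₂.ord ≤ Ordinal.type (Subrel r Y) := Cardinal.ord_le.2 (by rw [hcard])
        have heq : Ordinal.type (Subrel r Y) = κ₂.ord := le_antisymm (not_lt.1 hτ) hle2
        by_cases hbd : Set.Bounded r Y
        · obtain ⟨y, hy⟩ := hbd
          exact hDgood Y y hy hY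
        · exfalso
          have h1 := cof_subrel r Y ((Set.not_bounded_iff _).1 hbd)
          rw [heq, typer] at h1
          exact hcof h1.symm
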